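/- For letters a > b and distinct positive integers i ≠ j, the words wᵢ = a·a·bⁱ·a·b and wⱼ = a·a·bʲ·a·b have no overlap: wᵢ is not a factor (contiguous subword) of wⱼ, and no nonempty proper suffix of wᵢ equals a prefix of wⱼ (nor vice versa). -/
import Mathlib


/-- The word `wᵢ = a·a·bⁱ·a·b` over the alphabet `{a, b}` (encoded as `Fin 2`, with
`a = 1 > b = 0`). -/
def lyndonWordW (i : ℕ) : List (Fin 2) :=
  [1, 1] ++ List.replicate i 0 ++ [1, 0]

lemma lyndonWordW_length (i : ℕ) : (lyndonWordW i).length = i + 4 := by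
  simp [lyndonWordW]
lemma lyndonWordW_getElem (i n : ℕ) (hn : n < i + 4) :
    (lyndonWordW i)[n]'(by rw [lyndonWordW_length]; exact hn) =
      if n = 0 ∨ n = 1 ∨ n = i + 2 then 1 else 0 := by
  have : lyndonWordW i = 1 :: 1 :: (List.replicate i (0 : Fin 2) ++ [1, 0]) := by
    simp [lyndonWordW]
  match n with
  | 0 => simp [this]
  | 1 => simp [this]
  | (m+2) =>
    have h2 : (lyndonWordW i)[m+2]'(by rw [lyndonWordW_length]; exact hn)
        = (List.replicate i (0 : Fin 2) ++ [1, 0])[m]'(by simp; omega) := by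
      simp [this]
    rw [h2]
    rcases lt_or_ge m i with h | h
    · rw [List.getElem_append_left (by simpa using h)]
      rw [List.getElem_replicate, if_neg (by omega)]
    · rw [List.getElem_append_right (by simpa using h)]
      have hl : (List.replicate i (0 : Fin 2)).length = i := by simp
      have hmi : m = i ∨ m = i + 1 := by omega
      rcases hmi with rfl | rfl
      · simp [hl]
      · simp [hl]

lemma lyndonWordW_not_infix (i j : ℕ) (hi : 1 ≤ i) (hj : 1 ≤ j) (hij : i ≠ j) :
    ¬ lyndonWordW i <:+: lyndonWordW j := by
  rintro ⟨t, u, htu⟩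
  have hlen : t.length + (i + 4) + u.length = j + 4 := by
    have := congrArg List.length htu
    simp [lyndonWordW_length] at this
    omega
  set k := t.length with hk
  have key : ∀ m (hm : m < i + 4),
      (lyndonWordW j)[k + m]'(by rw [lyndonWordW_length]; omega) =
      (lyndonWordW i)[m]'(by rw [lyndonWordW_length]; omega) := by
    intro m hm
    rw [List.getElem_of_eq htu.symm]
    rw [List.getElem_append_left (by simp [lyndonWordW_length]; omega),
      List.getElem_append_right (by omega)]
    congr 1
    omega
  have get0 := key 0 (by omega)
  rw [lyndonWordW_getElem j (k+0) (by omega), lyndonWordW_getElem i 0 (by omega)] at get0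
  have h0 : k + 0 = 0 ∨ k + 0 = 1 ∨ k + 0 = j + 2 := by
    by_contra h
    rw [if_neg h, if_pos (Or.inl rfl)] at get0
    exact absurd get0 (by decide)
  have get1 := key 1 (by omega)
  have geti := key (i + 2) (by omega)
  rw [lyndonWordW_getElem j (k+1) (by omega), lyndonWordW_getElem i 1 (by omega)] at get1
  rw [lyndonWordW_getElem j (k + (i+2)) (by omega),
    lyndonWordW_getElem i (i+2) (by omega)] at geti
  have h1 : k + 1 = 0 ∨ k + 1 = 1 ∨ k + 1 = j + 2 := by
    by_contra h
    rw [if_neg h, if_pos (Or.inr (Or.inl rfl))] at get1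
    exact absurd get1 (by decide)
  have h2 : k + (i + 2) = 0 ∨ k + (i + 2) = 1 ∨ k + (i + 2) = j + 2 := by
    by_contra h
    rw [if_neg h, if_pos (Or.inr (Or.inr rfl))] at geti
    exact absurd geti (by decide)
  omega

lemma lyndonWordW_no_hang (i j : ℕ) (hi : 1 ≤ i) (hj : 1 ≤ j) :
    ∀ s : List (Fin 2), s ≠ [] → s ≠ lyndonWordW i → s <:+ lyndonWordW i →
        ¬ s <+: lyndonWordW j := by
  rintro s hne hsne ⟨t, ht⟩ ⟨u, hu⟩
  set k := t.length with hk
  have htne : t ≠ [] := by rintro rfl; exact hsne (by simpa using ht)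
  have hkpos : 1 ≤ k := List.length_pos_iff.mpr htne
  have hspos : 1 ≤ s.length := List.length_pos_iff.mpr hne
  have hlen : k + s.length = i + 4 := by
    have := congrArg List.length ht
    simp [lyndonWordW_length] at this
    omega
  have hlenj : s.length + u.length = j + 4 := by
    have := congrArg List.length hu
    simp [lyndonWordW_length] at this
    omega
  have key1 : ∀ m (hm : m < s.length),
      (lyndonWordW i)[k + m]'(by rw [lyndonWordW_length]; omega) = s[m] := by
    intro m hm
    rw [List.getElem_of_eq ht.symm, List.getElem_append_right (by omega)]
    congr 1
    omega
  have key2 : ∀ m (hm : m < s.length),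
      (lyndonWordW j)[m]'(by rw [lyndonWordW_length]; omega) = s[m] := by
    intro m hm
    rw [List.getElem_of_eq hu.symm, List.getElem_append_left hm]
  have e0 : (lyndonWordW i)[k + 0]'(by rw [lyndonWordW_length]; omega)
      = (lyndonWordW j)[0]'(by rw [lyndonWordW_length]; omega) := by
    rw [key1 0 (by omega), key2 0 (by omega)]
  rw [lyndonWordW_getElem i (k+0) (by omega), lyndonWordW_getElem j 0 (by omega)] at e0
  have h0 : k + 0 = 0 ∨ k + 0 = 1 ∨ k + 0 = i + 2 := by
    by_contra h
    rw [if_neg h, if_pos (Or.inl rfl)] at e0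
    exact absurd e0 (by decide)
  have hs2 : 1 < s.length := by omega
  have e1 : (lyndonWordW i)[k + 1]'(by rw [lyndonWordW_length]; omega)
      = (lyndonWordW j)[1]'(by rw [lyndonWordW_length]; omega) := by
    rw [key1 1 hs2, key2 1 hs2]
  rw [lyndonWordW_getElem i (k+1) (by omega), lyndonWordW_getElem j 1 (by omega)] at e1
  have h1 : k + 1 = 0 ∨ k + 1 = 1 ∨ k + 1 = i + 2 := by
    by_contra h
    rw [if_neg h, if_pos (Or.inr (Or.inl rfl))] at e1
    exact absurd e1 (by decide)
  omega

/-- For distinct positive integers `i ≠ j` the words `wᵢ` and `wⱼ` have no overlap: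
neither is a factor (contiguous subword) of the other, and no nonempty proper suffix
of one of them equals a prefix of the other. -/
theorem lyndonWordW_no_overlap (i j : ℕ) (hi : 1 ≤ i) (hj : 1 ≤ j) (hij : i ≠ j) :
    (¬ lyndonWordW i <:+: lyndonWordW j) ∧ (¬ lyndonWordW j <:+: lyndonWordW i) ∧
    (∀ s : List (Fin 2), s ≠ [] → s ≠ lyndonWordW i → s <:+ lyndonWordW i →
        ¬ s <+: lyndonWordW j) ∧
    (∀ s : List (Fin 2), s ≠ [] → s ≠ lyndonWordW j → s <:+ lyndonWordW j →
        ¬ s <+: lyndonWordW i) := by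
  exact ⟨lyndonWordW_not_infix i j hi hj hij, lyndonWordW_not_infix j i hj hi hij.symm,
    lyndonWordW_no_hang i j hi hj, lyndonWordW_no_hang j i hj hi⟩
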